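/- Let n ≥ 4 be even. For every X ∈ Sym₀(P_n) (real symmetric n×n, zero diagonal, off-diagonal entry (i,j) nonzero iff |i-j|=1) and every λ ∈ ℂ, the matrix obtained from X - λI by deleting row 2 has rank n - 1; equivalently, (X, e_2) is controllable for all X ∈ Sym₀(P_n). -/

import Mathlib

open Matrix

private lemma sum_pick {n : ℕ} (f : Fin n → ℂ) (t : ℕ)
    (hf : ∀ j : Fin n, (j : ℕ) ≠ t → f j = 0) :
    ∑ j, f j = if h : t < n then f ⟨t, h⟩ else 0 := by
  split
  · next h =>
    exact Finset.sum_eq_single_of_mem ⟨t, h⟩ (Finset.mem_univ _)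
      (fun b _ hb => hf b (fun hc => hb (Fin.ext hc)))
  · exact Finset.sum_eq_zero fun j _ => hf j (by omega)

private lemma rank_eq_of_inj {m : ℕ} {K : Type} [Fintype K] [DecidableEq K]
    (M : Matrix (Fin m) K ℂ)
    (h : ∀ c : Fin m → ℂ, (∀ x, ∑ r, M r x * c r = 0) → c = 0) : M.rank = m := by
  have hinj : Function.Injective Mᵀ.mulVecLin := by
    rw [← LinearMap.ker_eq_bot]
    refine LinearMap.ker_eq_bot'.mpr fun c hc => h c fun x => ?_
    have := congrFun hc x
    simpa [Matrix.mulVecLin_apply, Matrix.mulVec, dotProduct,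
      Matrix.vecMul, Matrix.transpose_apply, mul_comm] using this
  have h2 := LinearMap.finrank_range_add_finrank_ker Mᵀ.mulVecLin
  rw [LinearMap.ker_eq_bot.mpr hinj, finrank_bot] at h2
  rw [← Matrix.rank_transpose, Matrix.rank]
  simpa [Module.finrank_fintype_fun_eq_card] using h2

private lemma sum_skip {n : ℕ} (hn : 2 ≤ n) (f : Fin n → ℂ)
    (h1 : f ⟨1, by omega⟩ = 0) :
    ∑ j, f j =
      ∑ r : Fin (n - 1),
        f ⟨if (r : ℕ) < 1 then (r : ℕ) else (r : ℕ) + 1, by have := r.2; split <;> omega⟩ := by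
  rw [← Finset.add_sum_erase Finset.univ f (Finset.mem_univ (⟨1, by omega⟩ : Fin n)), h1,
    zero_add]
  refine Finset.sum_nbij' (i := fun (x : Fin n) => (⟨if (x : ℕ) < 1 then (x : ℕ) else (x : ℕ) - 1,
      by have := x.2; split <;> omega⟩ : Fin (n-1)))
    (j := fun (r : Fin (n-1)) => (⟨if (r : ℕ) < 1 then (r : ℕ) else (r : ℕ) + 1,
      by have := r.2; split <;> omega⟩ : Fin n)) ?_ ?_ ?_ ?_ ?_
  · intro a _; exact Finset.mem_univ _
  · intro r _
    refine Finset.mem_erase.mpr ⟨?_, Finset.mem_univ _⟩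
    simp only [ne_eq, Fin.ext_iff]
    split <;> omega
  · intro a ha
    have ha1 : (a : ℕ) ≠ 1 := by
      simpa [Fin.ext_iff] using (Finset.mem_erase.mp ha).1
    apply Fin.ext
    simp only
    split <;> (try split) <;> omega
  · intro r _
    apply Fin.ext
    simp only
    split <;> (try split) <;> omega
  · intro a ha
    have ha1 : (a : ℕ) ≠ 1 := by
      simpa [Fin.ext_iff] using (Finset.mem_erase.mp ha).1
    congr 1
    apply Fin.ext
    simp only
    split <;> (try split) <;> omega
private def uu (n : ℕ) (w : Fin n → ℂ) (k : ℕ) : ℂ := if h : k < n then w ⟨k, h⟩ else 0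

private def bb (n : ℕ) (A : Matrix (Fin n) (Fin n) ℂ) (p q : ℕ) : ℂ :=
  if h : p < n ∧ q < n then A ⟨p, h.1⟩ ⟨q, h.2⟩ else 0

private lemma key {n : ℕ} (hn : 4 ≤ n) (hneven : Even n)
    (A : Matrix (Fin n) (Fin n) ℂ) (μ : ℂ)
    (hdiag : ∀ i, A i i = -μ)
    (hband : ∀ i j : Fin n, ¬((i : ℕ) + 1 = (j : ℕ) ∨ (j : ℕ) + 1 = (i : ℕ)) → i ≠ j → A i j = 0)
    (hne : ∀ i j : Fin n, ((i : ℕ) + 1 = (j : ℕ) ∨ (j : ℕ) + 1 = (i : ℕ)) → A i j ≠ 0)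
    (w : Fin n → ℂ) (hw : ∀ i, ∑ j, A i j * w j = 0)
    (h1 : w ⟨1, by omega⟩ = 0) : w = 0 := by
  have hu_ge : ∀ k, n ≤ k → uu n w k = 0 := fun k hk => dif_neg (by omega)
  have hu1 : uu n w 1 = 0 := by rw [uu, dif_pos (by omega : 1 < n)]; exact h1
  have hBne1 : ∀ p, p + 1 < n → bb n A p (p+1) ≠ 0 := by
    intro p hp
    rw [bb, dif_pos ⟨by omega, hp⟩]
    exact hne _ _ (Or.inl rfl)
  have hBne2 : ∀ p, p + 1 < n → bb n A (p+1) p ≠ 0 := by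
    intro p hp
    rw [bb, dif_pos ⟨hp, by omega⟩]
    exact hne _ _ (Or.inr rfl)
  -- the row equations
  have hrow : ∀ p : ℕ, 0 < p → p < n →
      bb n A p (p-1) * uu n w (p-1) + (-μ) * uu n w p + bb n A p (p+1) * uu n w (p+1) = 0 := by
    intro p hp0 hpn
    have hsplit : ∀ j : Fin n, A ⟨p, hpn⟩ j * w j =
        (if (j : ℕ) = p - 1 then A ⟨p, hpn⟩ j * w j else 0) +
        (if (j : ℕ) = p then A ⟨p, hpn⟩ j * w j else 0) +
        (if (j : ℕ) = p + 1 then A ⟨p, hpn⟩ j * w j else 0) := by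
      intro j
      by_cases e1 : (j : ℕ) = p - 1
      · rw [if_pos e1, if_neg (by omega), if_neg (by omega)]; ring
      · by_cases e2 : (j : ℕ) = p
        · rw [if_neg e1, if_pos e2, if_neg (by omega)]; ring
        · by_cases e3 : (j : ℕ) = p + 1
          · rw [if_neg e1, if_neg e2, if_pos e3]; ring
          · have hz : A ⟨p, hpn⟩ j = 0 := by
              refine hband _ _ (by simp only; omega) ?_
              simp only [ne_eq, Fin.ext_iff]; omega
            rw [if_neg e1, if_neg e2, if_neg e3, hz]; ring
    have h0 : (0 : ℂ) = ∑ j, A ⟨p, hpn⟩ j * w j := (hw ⟨p, hpn⟩).symm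
    rw [Finset.sum_congr rfl (fun j _ => hsplit j), Finset.sum_add_distrib,
      Finset.sum_add_distrib] at h0
    rw [sum_pick _ _ (fun j hj => if_neg hj), sum_pick _ _ (fun j hj => if_neg hj),
      sum_pick _ _ (fun j hj => if_neg hj)] at h0
    rw [dif_pos (show p - 1 < n by omega), dif_pos hpn] at h0
    rw [if_pos rfl, if_pos rfl] at h0
    have hm : A ⟨p, hpn⟩ ⟨p, hpn⟩ = -μ := hdiag _
    rw [hm] at h0
    have e1 : bb n A p (p-1) * uu n w (p-1) = A ⟨p, hpn⟩ ⟨p-1, by omega⟩ * w ⟨p-1, by omega⟩ := by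
      rw [bb, uu, dif_pos ⟨hpn, by omega⟩, dif_pos (show p - 1 < n by omega)]
    have e2 : (-μ) * uu n w p = -μ * w ⟨p, hpn⟩ := by
      rw [uu, dif_pos hpn]
    rw [e1, e2]
    by_cases hq : p + 1 < n
    · rw [dif_pos hq, if_pos rfl] at h0
      have e3 : bb n A p (p+1) * uu n w (p+1) = A ⟨p, hpn⟩ ⟨p+1, hq⟩ * w ⟨p+1, hq⟩ := by
        rw [bb, uu, dif_pos ⟨hpn, hq⟩, dif_pos hq]
      rw [e3]
      linear_combination -h0
    · rw [dif_neg hq] at h0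
      have e3 : bb n A p (p+1) * uu n w (p+1) = 0 := by
        rw [bb, dif_neg (fun hc => hq hc.2), zero_mul]
      rw [e3]
      linear_combination -h0
  have hrow0 : (-μ) * uu n w 0 + bb n A 0 1 * uu n w 1 = 0 := by
    have h0n : (0 : ℕ) < n := by omega
    have hsplit : ∀ j : Fin n, A ⟨0, h0n⟩ j * w j =
        (if (j : ℕ) = 0 then A ⟨0, h0n⟩ j * w j else 0) +
        (if (j : ℕ) = 1 then A ⟨0, h0n⟩ j * w j else 0) := by
      intro j
      by_cases e1 : (j : ℕ) = 0
      · rw [if_pos e1, if_neg (by omega)]; ring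
      · by_cases e2 : (j : ℕ) = 1
        · rw [if_neg e1, if_pos e2]; ring
        · have hz : A ⟨0, h0n⟩ j = 0 := by
            refine hband _ _ (by simp only; omega) ?_
            simp only [ne_eq, Fin.ext_iff]; omega
          rw [if_neg e1, if_neg e2, hz]; ring
    have h0 : (0 : ℂ) = ∑ j, A ⟨0, h0n⟩ j * w j := (hw ⟨0, h0n⟩).symm
    rw [Finset.sum_congr rfl (fun j _ => hsplit j), Finset.sum_add_distrib] at h0
    rw [sum_pick _ _ (fun j hj => if_neg hj), sum_pick _ _ (fun j hj => if_neg hj)] at h0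
    rw [dif_pos h0n, dif_pos (show 1 < n by omega), if_pos rfl, if_pos rfl] at h0
    have hm : A ⟨0, h0n⟩ ⟨0, h0n⟩ = -μ := hdiag _
    rw [hm] at h0
    have e1 : (-μ) * uu n w 0 = -μ * w ⟨0, h0n⟩ := by rw [uu, dif_pos h0n]
    have e2 : bb n A 0 1 * uu n w 1 = A ⟨0, h0n⟩ ⟨1, by omega⟩ * w ⟨1, by omega⟩ := by
      rw [bb, uu, dif_pos ⟨h0n, by omega⟩, dif_pos (show 1 < n by omega)]
    rw [e1, e2]
    linear_combination -h0
  -- now show all of u vanishes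
  have hall : ∀ k, uu n w k = 0 := by
    by_cases hμ : μ = 0
    · -- μ = 0 case
      have hun2 : uu n w (n-2) = 0 := by
        have h := hrow (n-1) (by omega) (by omega)
        have ex : n - 1 - 1 = n - 2 := by omega
        rw [ex, hμ, hu_ge (n-1+1) (by omega)] at h
        rw [mul_zero, neg_zero, zero_mul, add_zero, add_zero] at h
        exact (mul_eq_zero.mp h).resolve_left (by
          have e : n - 2 + 1 = n - 1 := by omega
          have := hBne2 (n-2) (by omega)
          rwa [e] at this)
      have hodd : ∀ k, uu n w (2*k+1) = 0 := by
        intro k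
        induction k with
        | zero => simpa using hu1
        | succ k ih =>
          by_cases hk : 2*(k+1)+1 < n
          · have h := hrow (2*k+2) (by omega) (by omega)
            have ea : 2*k+2 - 1 = 2*k+1 := by omega
            have eb : 2*k+2 + 1 = 2*(k+1)+1 := by omega
            rw [ea, eb, ih, hμ, mul_zero, neg_zero, zero_mul, zero_add, zero_add] at h
            refine (mul_eq_zero.mp h).resolve_left ?_
            have := hBne1 (2*k+2) (by omega)
            rwa [eb] at this
          · exact hu_ge _ (by omega)
      have heven : ∀ j, uu n w (n - 2 - 2*j) = 0 := by
        intro j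
        induction j with
        | zero => simpa using hun2
        | succ j ih =>
          obtain ⟨r, hr⟩ := hneven
          by_cases hc : 2*j + 4 ≤ n
          · have h := hrow (n - 2 - 2*j - 1) (by omega) (by omega)
            have ea : n - 2 - 2*j - 1 - 1 = n - 2 - 2*(j+1) := by omega
            have eb : n - 2 - 2*j - 1 + 1 = n - 2 - 2*j := by omega
            rw [ea, eb, ih, hμ, mul_zero, neg_zero, zero_mul, add_zero, add_zero] at h
            refine (mul_eq_zero.mp h).resolve_left ?_
            have ec : n - 2 - 2*(j+1) + 1 = n - 2 - 2*j - 1 := by omega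
            have := hBne2 (n - 2 - 2*(j+1)) (by omega)
            rwa [ec] at this
          · have e0 : n - 2 - 2*j = 0 := by omega
            have e1 : n - 2 - 2*(j+1) = 0 := by omega
            rw [e1, ← e0]
            exact ih
      intro k
      by_cases hk : k < n
      · rcases Nat.even_or_odd k with he | ho
        · obtain ⟨a, ha⟩ := he
          obtain ⟨r, hr⟩ := hneven
          have := heven ((n - 2 - k)/2)
          have e : n - 2 - 2*((n-2-k)/2) = k := by omega
          rwa [e] at this
        · obtain ⟨a, ha⟩ := ho
          have := hodd a
          rwa [show 2*a+1 = k by omega] at this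
      · exact hu_ge k (by omega)
    · -- μ ≠ 0 case
      have hu0 : uu n w 0 = 0 := by
        have h := hrow0
        rw [hu1, mul_zero, add_zero] at h
        rcases mul_eq_zero.mp h with h' | h'
        · exact absurd (neg_eq_zero.mp h') hμ
        · exact h'
      have main : ∀ k, uu n w k = 0 ∧ uu n w (k+1) = 0 := by
        intro k
        induction k with
        | zero => exact ⟨hu0, hu1⟩
        | succ k ih =>
          refine ⟨ih.2, ?_⟩
          by_cases hk : k + 1 + 1 < n
          · have h := hrow (k+1) (by omega) (by omega)
            rw [Nat.add_sub_cancel, ih.1, ih.2, mul_zero, mul_zero, zero_add, zero_add] at h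
            exact (mul_eq_zero.mp h).resolve_left (hBne1 (k+1) hk)
          · exact hu_ge _ (by omega)
      exact fun k => (main k).1
  funext i
  have h := hall (i : ℕ)
  rw [uu, dif_pos i.2] at h
  simpa using h
/-- For even `n ≥ 4` and `X ∈ Sym₀(P_n)`, deleting row 2 from `X - λI` always leaves
rank `n-1`; equivalently `(X, e_2)` is controllable for all `X ∈ Sym₀(P_n)`.
Vertices `1,…,n` are represented by `Fin n`. -/
theorem stmt14 (n : ℕ) (hn : 4 ≤ n) (hneven : Even n) (X : Matrix (Fin n) (Fin n) ℝ)
    (hsym : X.IsSymm)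
    (hedge : ∀ a b : Fin n, (a.1 + 1 = b.1 ∨ b.1 + 1 = a.1) → X a b ≠ 0)
    (hnonedge : ∀ a b : Fin n, ¬(a.1 + 1 = b.1 ∨ b.1 + 1 = a.1) → X a b = 0) :
    (∀ μ : ℂ,
      (Matrix.of fun (r : Fin (n - 1)) (c : Fin n) =>
        (X.map Complex.ofReal - μ • 1)
          ⟨if r.1 < 1 then r.1 else r.1 + 1, by have := r.2; split <;> omega⟩ c).rank
        = n - 1) ∧
    (∀ μ : ℂ,
      (Matrix.fromCols (X.map Complex.ofReal - μ • 1)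
        (Matrix.of fun (r : Fin n) (_ : Fin 1) => if r.1 = 1 then (1 : ℂ) else 0)).rank
          = n) := by
  have hdiagX : ∀ i : Fin n, X i i = 0 := fun i => hnonedge i i (by omega)
  have hXsym : ∀ i j : Fin n, X j i = X i j := fun i j => by
    have := congrFun (congrFun hsym i) j
    simpa [Matrix.transpose_apply] using this
  have hAkey : ∀ (μ : ℂ) (w : Fin n → ℂ),
      (∀ i, ∑ j, (X.map Complex.ofReal - μ • (1 : Matrix (Fin n) (Fin n) ℂ)) i j * w j = 0) →
      w ⟨1, by omega⟩ = 0 → w = 0 := by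
    intro μ w hw h1
    refine key hn hneven _ μ ?_ ?_ ?_ w hw h1
    · intro i
      simp [Matrix.sub_apply, Matrix.map_apply, Matrix.smul_apply, Matrix.one_apply_eq,
        hdiagX i, smul_eq_mul]
    · intro i j hnadj hij
      rw [Matrix.sub_apply, Matrix.map_apply, Matrix.smul_apply, Matrix.one_apply_ne hij,
        hnonedge i j hnadj]
      simp
    · intro i j hadj
      have hij : i ≠ j := by rw [ne_eq, Fin.ext_iff]; omega
      rw [Matrix.sub_apply, Matrix.map_apply, Matrix.smul_apply, Matrix.one_apply_ne hij]
      simpa using hedge i j hadj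
  have hAsym : ∀ (μ : ℂ) (i j : Fin n),
      (X.map Complex.ofReal - μ • (1 : Matrix (Fin n) (Fin n) ℂ)) j i
        = (X.map Complex.ofReal - μ • 1) i j := by
    intro μ i j
    by_cases h : i = j
    · subst h; rfl
    · rw [Matrix.sub_apply, Matrix.sub_apply, Matrix.map_apply, Matrix.map_apply,
        Matrix.smul_apply, Matrix.smul_apply, Matrix.one_apply_ne h,
        Matrix.one_apply_ne (Ne.symm h), hXsym i j]
  constructor
  · intro μ
    refine rank_eq_of_inj _ ?_
    intro c hc
    simp only [Matrix.of_apply] at hc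
    set w : Fin n → ℂ := fun i => if h : (i : ℕ) = 1 then 0 else
      c ⟨if (i : ℕ) < 1 then (i : ℕ) else (i : ℕ) - 1, by
        have h2 := i.2; split <;> omega⟩ with hwdef
    have hw1 : w ⟨1, by omega⟩ = 0 := by rw [hwdef]; exact dif_pos rfl
    have hwemb : ∀ r : Fin (n-1),
        w ⟨if (r : ℕ) < 1 then (r : ℕ) else (r : ℕ) + 1,
          by have := r.2; split <;> omega⟩ = c r := by
      intro r
      rw [hwdef]
      simp only
      rw [dif_neg (by split <;> omega)]
      congr 1
      apply Fin.ext
      simp only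
      split <;> (try split) <;> omega
    have hw : ∀ i, ∑ j : Fin n,
        (X.map Complex.ofReal - μ • (1 : Matrix (Fin n) (Fin n) ℂ)) i j * w j = 0 := by
      intro i
      have step1 : ∑ j : Fin n, (X.map Complex.ofReal - μ • (1 : Matrix (Fin n) (Fin n) ℂ)) i j * w j
          = ∑ j : Fin n, (X.map Complex.ofReal - μ • (1 : Matrix (Fin n) (Fin n) ℂ)) j i * w j :=
        Finset.sum_congr rfl fun j _ => by rw [hAsym μ i j]
      rw [step1, sum_skip (by omega)
        (fun j => (X.map Complex.ofReal - μ • (1 : Matrix (Fin n) (Fin n) ℂ)) j i * w j)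
        (mul_eq_zero_of_right _ hw1)]
      calc ∑ r : Fin (n-1), (X.map Complex.ofReal - μ • (1 : Matrix (Fin n) (Fin n) ℂ))
              ⟨if (r : ℕ) < 1 then (r : ℕ) else (r : ℕ) + 1, by have := r.2; split <;> omega⟩ i
              * w ⟨if (r : ℕ) < 1 then (r : ℕ) else (r : ℕ) + 1, by have := r.2; split <;> omega⟩
          = ∑ r : Fin (n-1), (X.map Complex.ofReal - μ • (1 : Matrix (Fin n) (Fin n) ℂ))
              ⟨if (r : ℕ) < 1 then (r : ℕ) else (r : ℕ) + 1, by have := r.2; split <;> omega⟩ i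
              * c r := Finset.sum_congr rfl fun r _ => by rw [hwemb r]
        _ = 0 := hc i
    have hwz : w = 0 := hAkey μ w hw hw1
    funext r
    have := hwemb r
    rw [hwz] at this
    simpa using this.symm
  · intro μ
    refine rank_eq_of_inj _ ?_
    intro c hc
    have hc1 : ∀ i : Fin n,
        ∑ r, (X.map Complex.ofReal - μ • (1 : Matrix (Fin n) (Fin n) ℂ)) r i * c r = 0 := by
      intro i
      have h := hc (Sum.inl i)
      simpa only [Matrix.fromCols_apply_inl] using h
    have hc2 : c ⟨1, by omega⟩ = 0 := by
      have h := hc (Sum.inr 0)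
      simp only [Matrix.fromCols_apply_inr, Matrix.of_apply] at h
      rw [sum_pick (fun r : Fin n => (if (r : ℕ) = 1 then (1:ℂ) else 0) * c r) 1
        (fun j hj => by simp [hj]), dif_pos (show 1 < n by omega),
        if_pos rfl, one_mul] at h
      exact h
    refine hAkey μ c ?_ hc2
    intro i
    have step1 : ∑ j : Fin n, (X.map Complex.ofReal - μ • (1 : Matrix (Fin n) (Fin n) ℂ)) i j * c j
        = ∑ j : Fin n, (X.map Complex.ofReal - μ • (1 : Matrix (Fin n) (Fin n) ℂ)) j i * c j :=
      Finset.sum_congr rfl fun j _ => by rw [hAsym μ i j]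
    rw [step1]
    exact hc1 i
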